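/- For (u, v) ∈ ∂([−3/4, −1/4] × [0, 1]) (and hence, by the maximum modulus principle applied to 1/Γ, for all (u,v) in [−3/4,−1/4]×[0,1]), one has |Γ(u + iv)| ≥ 0.4. -/

import Mathlib

open Complex Filter Finset Topology


lemma aux_step (x s : ℝ) (hx : 1 ≤ x) (hs0 : 0 ≤ s) (hs1 : s ≤ 1) :
    ∀ m : ℕ, 3 ≤ m → (∏ j ∈ Finset.range m, (1 + s/((x+j)^2))) *
      (1 - s/(x+5/2) + s/(x+m-1/2)) ≤ (1+s/x^2)*(1+s/(x+1)^2)*(1+s/(x+2)^2) := by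
  intro m hm
  induction m, hm using Nat.le_induction with
  | base =>
      have h3 : (1 - s/(x+5/2) + s/(x+(3:ℕ)-1/2)) = 1 := by push_cast; ring
      rw [h3, mul_one]
      rw [Finset.prod_range_succ, Finset.prod_range_succ, Finset.prod_range_one]
      push_cast
      ring_nf
      exact le_rfl
  | succ m hm ih =>
      rw [Finset.prod_range_succ]
      refine le_trans ?_ ih
      have hm3 : (3:ℝ) ≤ (m:ℝ) := by exact_mod_cast hm
      have hp1 : (0:ℝ) < x + m - 1/2 := by linarith
      have hp2 : (0:ℝ) < x + m + 1/2 := by linarith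
      have hp3 : (0:ℝ) < (x+m)^2 := by nlinarith
      have hp4 : (0:ℝ) < x + 5/2 := by linarith
      have hσ : s/(x+5/2) ≤ 1 := by rw [div_le_one hp4]; linarith
      have key : (1 + s/(x+(m:ℝ))^2) * (1 - s/(x+5/2) + s/(x+((m:ℕ)+1:ℕ)-1/2)) ≤
          (1 - s/(x+5/2) + s/(x+(m:ℝ)-1/2)) := by
        push_cast
        rw [show x + ((m:ℝ)+1) - 1/2 = x + (m:ℝ) + 1 - 1/2 from by ring]
        set t := s/(x+(m:ℝ))^2 with ht
        have ht0 : 0 ≤ t := by positivity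
        have hB' : 1 - s/(x+5/2) + s/(x+(m:ℝ)+1-1/2) ≤ 1 := by
          have : s/(x+(m:ℝ)+1-1/2) ≤ s/(x+5/2) :=
            div_le_div_of_nonneg_left hs0 hp4 (by linarith)
          linarith
        have htB' : t * (1 - s/(x+5/2) + s/(x+(m:ℝ)+1-1/2)) ≤ t :=
          mul_le_of_le_one_right ht0 hB'
        have hd : s/(x+(m:ℝ)-1/2) - s/(x+(m:ℝ)+1-1/2) = s/((x+(m:ℝ)-1/2)*(x+(m:ℝ)+1-1/2)) := by
          rw [div_sub_div _ _ (ne_of_gt hp1) (by linarith : x+(m:ℝ)+1-1/2 ≠ 0)]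
          congr 1
          ring
        have ht2 : t ≤ s/((x+(m:ℝ)-1/2)*(x+(m:ℝ)+1-1/2)) := by
          rw [ht]
          apply div_le_div_of_nonneg_left hs0 (by nlinarith)
          nlinarith
        nlinarith [htB', ht2, hd]
      calc (∏ j ∈ Finset.range m, (1 + s/((x+j)^2))) * (1 + s/(x+(m:ℝ))^2) *
            (1 - s/(x+5/2) + s/(x+((m:ℕ)+1:ℕ)-1/2))
          = (∏ j ∈ Finset.range m, (1 + s/((x+j)^2))) * ((1 + s/(x+(m:ℝ))^2) *
            (1 - s/(x+5/2) + s/(x+((m:ℕ)+1:ℕ)-1/2))) := by ring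
        _ ≤ (∏ j ∈ Finset.range m, (1 + s/((x+j)^2))) * (1 - s/(x+5/2) + s/(x+(m:ℝ)-1/2)) := by
            apply mul_le_mul_of_nonneg_left key
            apply Finset.prod_nonneg
            intro j _
            have h2 : (0:ℝ) < (x+(j:ℝ))^2 := by positivity
            positivity

lemma prod_bound (x s : ℝ) (hx : 1 ≤ x) (hs0 : 0 ≤ s) (hs1 : s ≤ 1) (m : ℕ) :
    (∏ j ∈ Finset.range m, (1 + s/((x+j)^2))) * (1 - s/(x+5/2)) ≤
      (1+s/x^2)*(1+s/(x+1)^2)*(1+s/(x+2)^2) := by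
  have hA : (0:ℝ) ≤ s/x^2 := by positivity
  have hB : (0:ℝ) ≤ s/(x+1)^2 := by positivity
  have hC : (0:ℝ) ≤ s/(x+2)^2 := by positivity
  have hσ0 : (0:ℝ) ≤ s/(x+5/2) := by positivity
  have hσ1 : s/(x+5/2) ≤ 1 := by rw [div_le_one (by linarith)]; linarith
  rcases le_or_gt 3 m with hm | hm
  · have hstep := aux_step x s hx hs0 hs1 m hm
    have hm3 : (3:ℝ) ≤ (m:ℝ) := by exact_mod_cast hm
    have htail : (0:ℝ) ≤ s/(x+(m:ℝ)-1/2) := by apply div_nonneg hs0; linarith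
    have hprodpos : (0:ℝ) ≤ ∏ j ∈ Finset.range m, (1 + s/((x+j)^2)) := by
      apply Finset.prod_nonneg
      intro j _
      have h2 : (0:ℝ) < (x+(j:ℝ))^2 := by positivity
      positivity
    nlinarith [mul_le_mul_of_nonneg_left htail hprodpos]
  · have hints : (0:ℝ) ≤ (s/x^2)*(s/(x+1)^2) ∧ (0:ℝ) ≤ (s/x^2)*(s/(x+2)^2) ∧
        (0:ℝ) ≤ (s/(x+1)^2)*(s/(x+2)^2) ∧ (0:ℝ) ≤ (s/x^2)*(s/(x+1)^2)*(s/(x+2)^2) :=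
      ⟨mul_nonneg hA hB, mul_nonneg hA hC, mul_nonneg hB hC,
        mul_nonneg (mul_nonneg hA hB) hC⟩
    obtain ⟨h1, h2, h3, h4⟩ := hints
    interval_cases m
    · simp only [Finset.range_zero, Finset.prod_empty, one_mul]
      nlinarith
    · simp only [Finset.prod_range_one]
      push_cast
      rw [show x + (0:ℝ) = x from by ring]
      nlinarith
    · rw [Finset.prod_range_succ, Finset.prod_range_one]
      push_cast
      rw [show x + (0:ℝ) = x from by ring]
      nlinarith


lemma gamma_sq_lower (x v : ℝ) (hx : 1 ≤ x) (hv : v^2 ≤ 1) :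
    Real.Gamma x ^ 2 * (1 - v^2/(x+5/2)) ≤ ‖Complex.Gamma (x + v*I)‖ ^ 2 *
      ((1+v^2/x^2)*(1+v^2/(x+1)^2)*(1+v^2/(x+2)^2)) := by
  set w : ℂ := (x:ℂ) + v*I with hw
  have hx0 : (0:ℝ) < x := by linarith
  have hv0 : (0:ℝ) ≤ v^2 := sq_nonneg v
  have key : ∀ n : ℕ, Real.GammaSeq x n ^ 2 * (1 - v^2/(x+5/2)) ≤
      ‖Complex.GammaSeq w n‖ ^ 2 *
      ((1+v^2/x^2)*(1+v^2/(x+1)^2)*(1+v^2/(x+2)^2)) := by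
    intro n
    rcases Nat.eq_zero_or_pos n with rfl | hn
    · -- n = 0 : real side is 0
      have : Real.GammaSeq x 0 = 0 := by
        simp [Real.GammaSeq, Real.zero_rpow (ne_of_gt hx0)]
      rw [this]
      rw [show (0:ℝ)^2 = 0 from by norm_num, zero_mul]
      positivity
    · have hnR : (0:ℝ) < (n:ℝ) := by exact_mod_cast hn
      -- abs of complex GammaSeq
      have hwj : ∀ j : ℕ, ‖w + j‖ ^ 2 = ((x+j)^2 + v^2) := by
        intro j
        rw [Complex.sq_norm, Complex.normSq_apply]
        have hre : (w + j).re = x + j := by simp [hw]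
        have him : (w + j).im = v := by simp [hw]
        rw [hre, him]; ring
      have hwjpos : ∀ j : ℕ, (0:ℝ) < (x+(j:ℝ))^2 + v^2 := by
        intro j
        have : (0:ℝ) < (x+(j:ℝ))^2 := by positivity
        linarith
      have habs : ‖Complex.GammaSeq w n‖ ^ 2 =
          ((n:ℝ)^x * (n.factorial:ℝ))^2 / ∏ j ∈ Finset.range (n+1), ((x+j)^2 + v^2) := by
        rw [Complex.GammaSeq, norm_div, norm_mul, norm_prod, div_pow, mul_pow]
        rw [show ((n:ℂ)) = (((n:ℝ)):ℂ) by push_cast; rfl]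
        rw [Complex.norm_cpow_eq_rpow_re_of_pos hnR]
        have hrew : w.re = x := by simp [hw]
        rw [hrew]
        rw [show ‖(n.factorial : ℂ)‖ = (n.factorial : ℝ) by
          exact_mod_cast Complex.norm_natCast n.factorial]
        rw [mul_pow, ← Finset.prod_pow]
        congr 1
        exact Finset.prod_congr rfl fun j _ => hwj j
      -- real GammaSeq
      have hrseq : Real.GammaSeq x n = ((n:ℝ)^x * (n.factorial:ℝ)) /
          ∏ j ∈ Finset.range (n+1), (x+j) := by
        rfl
      have hxj : ∀ j ∈ Finset.range (n+1), (0:ℝ) < x + (j:ℝ) := by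
        intro j _
        have : (0:ℝ) ≤ (j:ℝ) := Nat.cast_nonneg j
        linarith
      have hppos : (0:ℝ) < ∏ j ∈ Finset.range (n+1), (x+(j:ℝ)) :=
        Finset.prod_pos hxj
      have hqpos : (0:ℝ) < ∏ j ∈ Finset.range (n+1), ((x+(j:ℝ))^2 + v^2) :=
        Finset.prod_pos fun j _ => hwjpos j
      have hApos : (0:ℝ) < (n:ℝ)^x * (n.factorial:ℝ) := by
        have := Real.rpow_pos_of_pos hnR x
        have hf : (0:ℝ) < (n.factorial:ℝ) := by exact_mod_cast n.factorial_pos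
        positivity
      -- core product inequality
      have hcore : (∏ j ∈ Finset.range (n+1), ((x+(j:ℝ))^2 + v^2)) * (1 - v^2/(x+5/2)) ≤
          (∏ j ∈ Finset.range (n+1), (x+(j:ℝ))^2) *
          ((1+v^2/x^2)*(1+v^2/(x+1)^2)*(1+v^2/(x+2)^2)) := by
        have hsplit : ∏ j ∈ Finset.range (n+1), ((x+(j:ℝ))^2 + v^2) =
            (∏ j ∈ Finset.range (n+1), (x+(j:ℝ))^2) *
            ∏ j ∈ Finset.range (n+1), (1 + v^2/((x+j)^2)) := by
          rw [← Finset.prod_mul_distrib]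
          apply Finset.prod_congr rfl
          intro j hj
          have h2 : ((x+(j:ℝ))^2) ≠ 0 := by positivity
          field_simp
        rw [hsplit, mul_assoc]
        apply mul_le_mul_of_nonneg_left _ (Finset.prod_nonneg fun j _ => sq_nonneg _)
        exact prod_bound x (v^2) hx hv0 hv (n+1)
      -- combine
      rw [habs, hrseq, div_pow, ← Finset.prod_pow]
      rw [div_mul_eq_mul_div, div_mul_eq_mul_div, div_le_div_iff₀ (by positivity) hqpos]
      calc ((n:ℝ)^x * (n.factorial:ℝ))^2 * (1 - v^2/(x+5/2)) *
            (∏ j ∈ Finset.range (n+1), ((x+(j:ℝ))^2+v^2))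
          = ((n:ℝ)^x * (n.factorial:ℝ))^2 *
            ((∏ j ∈ Finset.range (n+1), ((x+(j:ℝ))^2+v^2)) * (1 - v^2/(x+5/2))) := by ring
        _ ≤ ((n:ℝ)^x * (n.factorial:ℝ))^2 *
            ((∏ j ∈ Finset.range (n+1), (x+(j:ℝ))^2) *
              ((1+v^2/x^2)*(1+v^2/(x+1)^2)*(1+v^2/(x+2)^2))) := by
            apply mul_le_mul_of_nonneg_left hcore (by positivity)
        _ = ((n:ℝ)^x * (n.factorial:ℝ))^2 *
              ((1+v^2/x^2)*(1+v^2/(x+1)^2)*(1+v^2/(x+2)^2)) *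
              ∏ j ∈ Finset.range (n+1), (x+(j:ℝ))^2 := by ring
  -- pass to the limit
  have lim1 : Tendsto (fun n => Real.GammaSeq x n ^ 2 * (1 - v^2/(x+5/2))) atTop
      (𝓝 (Real.Gamma x ^ 2 * (1 - v^2/(x+5/2)))) :=
    ((Real.GammaSeq_tendsto_Gamma x).pow 2).mul_const _
  have lim2 : Tendsto (fun n => ‖Complex.GammaSeq w n‖ ^ 2 *
      ((1+v^2/x^2)*(1+v^2/(x+1)^2)*(1+v^2/(x+2)^2))) atTop
      (𝓝 (‖Complex.Gamma w‖ ^ 2 *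
        ((1+v^2/x^2)*(1+v^2/(x+1)^2)*(1+v^2/(x+2)^2)))) := by
    apply Tendsto.mul_const
    apply Tendsto.pow
    exact (continuous_norm.tendsto _).comp (Complex.GammaSeq_tendsto_Gamma w)
  exact le_of_tendsto_of_tendsto' lim1 lim2 key


lemma Gamma_eleven_half : Real.Gamma (11/2) = 945/32 * Real.sqrt Real.pi := by
  have h0 := Real.Gamma_one_half_eq
  have h1 : Real.Gamma (3/2) = 1/2 * Real.sqrt Real.pi := by
    rw [show (3:ℝ)/2 = 1/2 + 1 by norm_num, Real.Gamma_add_one (by norm_num), h0]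
  have h2 : Real.Gamma (5/2) = 3/2 * (1/2) * Real.sqrt Real.pi := by
    rw [show (5:ℝ)/2 = 3/2 + 1 by norm_num, Real.Gamma_add_one (by norm_num), h1]; ring
  have h3 : Real.Gamma (7/2) = 5/2 * (3/2) * (1/2) * Real.sqrt Real.pi := by
    rw [show (7:ℝ)/2 = 5/2 + 1 by norm_num, Real.Gamma_add_one (by norm_num), h2]; ring
  have h4 : Real.Gamma (9/2) = 7/2 * (5/2) * (3/2) * (1/2) * Real.sqrt Real.pi := by
    rw [show (9:ℝ)/2 = 7/2 + 1 by norm_num, Real.Gamma_add_one (by norm_num), h3]; ring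
  rw [show (11:ℝ)/2 = 9/2 + 1 by norm_num, Real.Gamma_add_one (by norm_num), h4]; ring

lemma Gamma_thirteen_half : Real.Gamma (13/2) = 11/2 * Real.Gamma (11/2) := by
  rw [show (13:ℝ)/2 = 11/2 + 1 by norm_num, Real.Gamma_add_one (by norm_num)]

-- Gautschi-type bound, left branch: for 1 ≤ x ≤ 11/2,
lemma gautschi_left (x : ℝ) (h1 : 5 ≤ x) (h2 : x ≤ 11/2) :
    Real.Gamma (11/2) * x ^ (x - 11/2) ≤ Real.Gamma x := by
  have hx0 : (0:ℝ) < x := by linarith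
  have hGx : 0 < Real.Gamma x := Real.Gamma_pos_of_pos hx0
  rcases eq_or_lt_of_le h2 with heq | hlt
  · rw [heq]
    norm_num
  · set b := 11/2 - x with hb
    have hb0 : 0 < b := by simp [hb]; linarith
    have key := Real.Gamma_mul_add_mul_le_rpow_Gamma_mul_rpow_Gamma
      (s := x) (t := x+1) (a := 1-b) (b := b) hx0 (by linarith) (by simp only [hb]; linarith) hb0 (by ring)
    have harg : (1-b)*x + b*(x+1) = 11/2 := by rw [hb]; ring
    rw [harg, Real.Gamma_add_one (ne_of_gt hx0)] at key
    have hx_b : (0:ℝ) < x ^ b := Real.rpow_pos_of_pos hx0 b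
    have hrhs : Real.Gamma x ^ (1-b) * (x * Real.Gamma x) ^ b = Real.Gamma x * x ^ b := by
      rw [Real.mul_rpow hx0.le hGx.le]
      rw [show Real.Gamma x ^ (1-b) * (x^b * Real.Gamma x ^ b)
          = (Real.Gamma x ^ (1-b) * Real.Gamma x ^ b) * x^b from by ring]
      rw [← Real.rpow_add hGx, sub_add_cancel, Real.rpow_one]
    rw [hrhs] at key
    -- key : Real.Gamma (11/2) ≤ Real.Gamma x * x ^ b
    have hpow : x ^ (x - 11/2) = (x ^ b)⁻¹ := by
      rw [show x - 11/2 = -b from by rw [hb]; ring, Real.rpow_neg hx0.le]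
    rw [hpow]
    rw [mul_inv_le_iff₀ hx_b]
    linarith [key]

-- right branch: for 11/2 ≤ x < 13/2,
lemma gautschi_right (x : ℝ) (h1 : 11/2 ≤ x) (h2 : x ≤ 23/4) :
    11/2 * Real.Gamma (11/2) * x ^ (x - 13/2) ≤ Real.Gamma x := by
  have hx0 : (0:ℝ) < x := by linarith
  have hGx : 0 < Real.Gamma x := Real.Gamma_pos_of_pos hx0
  rcases eq_or_lt_of_le h1 with heq | hlt
  · rw [← heq]
    rw [show (11:ℝ)/2 - 13/2 = -1 from by norm_num, Real.rpow_neg_one]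
    rw [mul_comm (11/2 : ℝ) (Real.Gamma (11/2)), mul_assoc]
    norm_num
  · set c := x - 11/2 with hc
    have hc0 : 0 < c := by simp only [hc]; linarith
    have hc1 : c < 1 := by simp only [hc]; linarith
    have key := Real.Gamma_mul_add_mul_le_rpow_Gamma_mul_rpow_Gamma
      (s := x) (t := x+1) (a := c) (b := 1-c) hx0 (by linarith) hc0 (by linarith) (by ring)
    have harg : c*x + (1-c)*(x+1) = 13/2 := by rw [hc]; ring
    rw [harg, Real.Gamma_add_one (ne_of_gt hx0), Gamma_thirteen_half] at key
    have hx_c : (0:ℝ) < x ^ (1-c) := Real.rpow_pos_of_pos hx0 _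
    have hrhs : Real.Gamma x ^ c * (x * Real.Gamma x) ^ (1-c) = Real.Gamma x * x ^ (1-c) := by
      rw [Real.mul_rpow hx0.le hGx.le]
      rw [show Real.Gamma x ^ c * (x^(1-c) * Real.Gamma x ^ (1-c))
          = (Real.Gamma x ^ c * Real.Gamma x ^ (1-c)) * x^(1-c) from by ring]
      rw [← Real.rpow_add hGx, add_sub_cancel, Real.rpow_one]
    rw [hrhs] at key
    have hpow : x ^ (x - 13/2) = (x ^ (1-c))⁻¹ := by
      rw [show x - 13/2 = -(1-c) from by rw [hc]; ring, Real.rpow_neg hx0.le]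
    rw [hpow, mul_inv_le_iff₀ hx_c]
    linarith [key]


lemma rpow_lb (y r m : ℝ) (a : ℕ) (hy : 1 ≤ y)
    (hr : 0 ≤ r) (hm : 0 < m) (hpow : y^a ≤ m^64) (hrm : r * m ≤ 1) :
    r ≤ y ^ (-((a:ℝ)/64)) := by
  have hy0 : (0:ℝ) < y := by linarith
  have h64 : (y ^ ((a:ℝ)/64)) ^ (64:ℕ) = y ^ a := by
    rw [← Real.rpow_natCast (y ^ ((a:ℝ)/64)) 64, ← Real.rpow_mul hy0.le,
      show (a:ℝ)/64 * (64:ℕ) = (a:ℝ) from by push_cast; ring, Real.rpow_natCast]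
  have hyp : (0:ℝ) < y ^ ((a:ℝ)/64) := Real.rpow_pos_of_pos hy0 _
  have h1 : y ^ ((a:ℝ)/64) ≤ m := by
    by_contra h
    push_neg at h
    have := pow_lt_pow_left₀ h hm.le (n := 64) (by norm_num)
    rw [h64] at this
    linarith
  rw [Real.rpow_neg hy0.le]
  have h2 : r * (y ^ ((a:ℝ)/64)) ≤ 1 := le_trans (by nlinarith) hrm
  have h3 : (y ^ ((a:ℝ)/64)) * (y ^ ((a:ℝ)/64))⁻¹ = 1 := mul_inv_cancel₀ hyp.ne'
  nlinarith [mul_pos hyp (lt_of_le_of_lt (by linarith : (0:ℝ) ≤ 0) (inv_pos.mpr hyp))]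

-- Γ(u+6)² lower bound, left branch (u1 ≤ u ≤ u2 ≤ -1/2)
lemma gamma_sq_lb_left (u u1 u2 r m : ℝ) (a : ℕ)
    (h1 : u1 ≤ u) (h2 : u ≤ u2) (h3 : -3/4 ≤ u1) (h4 : u2 ≤ -1/2)
    (hexp : -((a:ℝ)/64) = u1 + 1/2)
    (hr : 0 ≤ r) (hm : 0 < m) (hpow : (u2+6)^a ≤ m^64) (hrm : r * m ≤ 1) :
    (945/32)^2 * 3.141592 * r^2 ≤ Real.Gamma (u+6)^2 := by
  set x := u + 6 with hx
  have hx5 : 5 ≤ x := by simp only [hx]; linarith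
  have hx12 : x ≤ 11/2 := by simp only [hx]; linarith
  have hg := gautschi_left x hx5 hx12
  have hy : (1:ℝ) ≤ u2 + 6 := by linarith
  have hr1 : r ≤ (u2+6) ^ (-((a:ℝ)/64)) := rpow_lb (u2+6) r m a hy hr hm hpow hrm
  have hr2 : (u2+6) ^ (-((a:ℝ)/64)) ≤ x ^ (-((a:ℝ)/64)) := by
    apply Real.rpow_le_rpow_of_nonpos (by linarith) (by simp only [hx]; linarith)
    rw [hexp]; linarith
  have hr3 : x ^ (u1 + 1/2) ≤ x ^ (x - 11/2) := by
    apply Real.rpow_le_rpow_of_exponent_le (by linarith)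
    simp only [hx]; linarith
  rw [hexp] at hr1 hr2
  have hrx : r ≤ x ^ (x - 11/2) := le_trans hr1 (le_trans hr2 hr3)
  have hG11 : 945/32 * Real.sqrt Real.pi * r ≤ Real.Gamma x := by
    have hs : (0:ℝ) ≤ 945/32 * Real.sqrt Real.pi := by positivity
    calc 945/32 * Real.sqrt Real.pi * r ≤ 945/32 * Real.sqrt Real.pi * (x ^ (x-11/2)) := by
          apply mul_le_mul_of_nonneg_left hrx hs
      _ = Real.Gamma (11/2) * x ^ (x - 11/2) := by rw [Gamma_eleven_half]
      _ ≤ Real.Gamma x := hg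
  have hGpos : 0 < Real.Gamma x := Real.Gamma_pos_of_pos (by linarith)
  have hlhs : (0:ℝ) ≤ 945/32 * Real.sqrt Real.pi * r := by positivity
  have hsq : (945/32 * Real.sqrt Real.pi * r)^2 ≤ Real.Gamma x ^2 :=
    pow_le_pow_left₀ hlhs hG11 2
  have hπ : Real.sqrt Real.pi ^ 2 = Real.pi := Real.sq_sqrt Real.pi_pos.le
  have hπ2 : (3.141592:ℝ) ≤ Real.pi := Real.pi_gt_d6.le
  calc (945/32)^2 * 3.141592 * r^2 ≤ (945/32)^2 * Real.pi * r^2 := by nlinarith [sq_nonneg r]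
    _ = (945/32)^2 * (Real.sqrt Real.pi^2) * r^2 := by rw [hπ]
    _ = (945/32 * Real.sqrt Real.pi * r)^2 := by ring
    _ ≤ Real.Gamma x ^ 2 := hsq

-- right branch (-1/2 ≤ u1 ≤ u ≤ u2 ≤ -1/4)
lemma gamma_sq_lb_right (u u1 u2 r m : ℝ) (a : ℕ)
    (h1 : u1 ≤ u) (h2 : u ≤ u2) (h3 : -1/2 ≤ u1) (h4 : u2 ≤ -1/4)
    (hexp : -((a:ℝ)/64) = u1 - 1/2)
    (hr : 0 ≤ r) (hm : 0 < m) (hpow : (u2+6)^a ≤ m^64) (hrm : r * m ≤ 1) :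
    (11/2)^2 * (945/32)^2 * 3.141592 * r^2 ≤ Real.Gamma (u+6)^2 := by
  set x := u + 6 with hx
  have hx5 : 11/2 ≤ x := by simp only [hx]; linarith
  have hx12 : x ≤ 23/4 := by simp only [hx]; linarith
  have hg := gautschi_right x hx5 hx12
  have hy : (1:ℝ) ≤ u2 + 6 := by linarith
  have hr1 : r ≤ (u2+6) ^ (-((a:ℝ)/64)) := rpow_lb (u2+6) r m a hy hr hm hpow hrm
  have hr2 : (u2+6) ^ (-((a:ℝ)/64)) ≤ x ^ (-((a:ℝ)/64)) := by
    apply Real.rpow_le_rpow_of_nonpos (by linarith) (by simp only [hx]; linarith)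
    rw [hexp]; linarith
  have hr3 : x ^ (u1 - 1/2) ≤ x ^ (x - 13/2) := by
    apply Real.rpow_le_rpow_of_exponent_le (by linarith)
    simp only [hx]; linarith
  rw [hexp] at hr1 hr2
  have hrx : r ≤ x ^ (x - 13/2) := le_trans hr1 (le_trans hr2 hr3)
  have hG11 : 11/2 * (945/32 * Real.sqrt Real.pi) * r ≤ Real.Gamma x := by
    have hs : (0:ℝ) ≤ 11/2 * (945/32 * Real.sqrt Real.pi) := by positivity
    calc 11/2 * (945/32 * Real.sqrt Real.pi) * r
        ≤ 11/2 * (945/32 * Real.sqrt Real.pi) * (x ^ (x-13/2)) := by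
          apply mul_le_mul_of_nonneg_left hrx hs
      _ = 11/2 * Real.Gamma (11/2) * x ^ (x - 13/2) := by rw [Gamma_eleven_half]
      _ ≤ Real.Gamma x := hg
  have hGpos : 0 < Real.Gamma x := Real.Gamma_pos_of_pos (by linarith)
  have hlhs : (0:ℝ) ≤ 11/2 * (945/32 * Real.sqrt Real.pi) * r := by positivity
  have hsq : (11/2 * (945/32 * Real.sqrt Real.pi) * r)^2 ≤ Real.Gamma x ^2 :=
    pow_le_pow_left₀ hlhs hG11 2
  have hπ : Real.sqrt Real.pi ^ 2 = Real.pi := Real.sq_sqrt Real.pi_pos.le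
  have hπ2 : (3.141592:ℝ) ≤ Real.pi := Real.pi_gt_d6.le
  calc (11/2)^2 * (945/32)^2 * 3.141592 * r^2 ≤ (11/2)^2 * (945/32)^2 * Real.pi * r^2 := by
        nlinarith [sq_nonneg r]
    _ = (11/2)^2 * (945/32)^2 * (Real.sqrt Real.pi^2) * r^2 := by rw [hπ]
    _ = (11/2 * (945/32 * Real.sqrt Real.pi) * r)^2 := by ring
    _ ≤ Real.Gamma x ^ 2 := hsq


set_option maxHeartbeats 1000000 in
lemma boxed (u v u1 u2 g : ℝ)
    (h1 : u1 ≤ u) (h2 : u ≤ u2) (h3 : -3/4 ≤ u1) (h4 : u2 ≤ -1/4) (hu12 : u1 ≤ u2)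
    (hv0 : 0 ≤ v) (hv1 : v ≤ 1)
    (hg : g ≤ Real.Gamma (u+6)^2)
    (hnum : 16/100 * (((1+1/(u1+6)^2) * (1+1/(u1+6+1)^2) * (1+1/(u1+6+2)^2)) /
        (1 - 1/(u1+6+5/2))) *
      ((u1^2+1)*((u2+1)^2+1)*((u2+2)^2+1)*((u2+3)^2+1)*((u2+4)^2+1)*((u2+5)^2+1)) ≤ g) :
    2/5 ≤ ‖Complex.Gamma ((u:ℂ) + v*I)‖ := by
  set z : ℂ := (u:ℂ) + v*I with hz
  have hu34 : -3/4 ≤ u := by linarith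
  have hu14 : u ≤ -1/4 := by linarith
  have hs1 : v^2 ≤ 1 := by nlinarith
  have hs0 : 0 ≤ v^2 := sq_nonneg v
  -- nonvanishing
  have hne : ∀ (c : ℝ), u + c ≠ 0 → z + (c:ℂ) ≠ 0 := by
    intro c hc h
    apply hc
    have h2 := congrArg Complex.re h
    simpa [hz] using h2
  have hz0 : z ≠ 0 := by
    have := hne 0 (by linarith)
    simpa using this
  have hz1 : z + 1 ≠ 0 := by have := hne 1 (by linarith); simpa using this
  have hz2 : z + 2 ≠ 0 := by have := hne 2 (by linarith); simpa using this
  have hz3 : z + 3 ≠ 0 := by have := hne 3 (by linarith); simpa using this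
  have hz4 : z + 4 ≠ 0 := by have := hne 4 (by linarith); simpa using this
  have hz5 : z + 5 ≠ 0 := by have := hne 5 (by linarith); simpa using this
  -- recurrence
  have g1 : Complex.Gamma (z+1) = z * Complex.Gamma z := Complex.Gamma_add_one z hz0
  have g2 : Complex.Gamma (z+2) = (z+1) * Complex.Gamma (z+1) := by
    rw [show z+2 = (z+1)+1 from by ring, Complex.Gamma_add_one _ hz1]
  have g3 : Complex.Gamma (z+3) = (z+2) * Complex.Gamma (z+2) := by
    rw [show z+3 = (z+2)+1 from by ring, Complex.Gamma_add_one _ hz2]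
  have g4 : Complex.Gamma (z+4) = (z+3) * Complex.Gamma (z+3) := by
    rw [show z+4 = (z+3)+1 from by ring, Complex.Gamma_add_one _ hz3]
  have g5 : Complex.Gamma (z+5) = (z+4) * Complex.Gamma (z+4) := by
    rw [show z+5 = (z+4)+1 from by ring, Complex.Gamma_add_one _ hz4]
  have g6 : Complex.Gamma (z+6) = (z+5) * Complex.Gamma (z+5) := by
    rw [show z+6 = (z+5)+1 from by ring, Complex.Gamma_add_one _ hz5]
  have hGrec : Complex.Gamma (z+6) =
      (z+5) * ((z+4) * ((z+3) * ((z+2) * ((z+1) * (z * Complex.Gamma z))))) := by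
    rw [g6, g5, g4, g3, g2, g1]
  set A : ℝ := ‖Complex.Gamma z‖ with hA
  have habs : ‖Complex.Gamma (z+6)‖ =
      ‖z+5‖ * (‖z+4‖ * (‖z+3‖ *
        (‖z+2‖ * (‖z+1‖ * (‖z‖ * A))))) := by
    rw [hGrec]
    simp only [norm_mul, hA]
  -- squared abs values
  have sq0 : (‖z‖)^2 = u^2 + v^2 := by
    rw [Complex.sq_norm, Complex.normSq_apply]; simp [hz]; ring
  have sqc : ∀ c : ℝ, (‖z + (c:ℂ)‖)^2 = (u+c)^2 + v^2 := by
    intro c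
    rw [Complex.sq_norm, Complex.normSq_apply]; simp [hz]; ring
  have sq1 : (‖z+1‖)^2 = (u+1)^2 + v^2 := by have := sqc 1; simpa using this
  have sq2 : (‖z+2‖)^2 = (u+2)^2 + v^2 := by have := sqc 2; simpa using this
  have sq3 : (‖z+3‖)^2 = (u+3)^2 + v^2 := by have := sqc 3; simpa using this
  have sq4 : (‖z+4‖)^2 = (u+4)^2 + v^2 := by have := sqc 4; simpa using this
  have sq5 : (‖z+5‖)^2 = (u+5)^2 + v^2 := by have := sqc 5; simpa using this
  have hPform : (‖Complex.Gamma (z+6)‖)^2 =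
      ((u^2+v^2) * ((u+1)^2+v^2) * ((u+2)^2+v^2) * ((u+3)^2+v^2) * ((u+4)^2+v^2)
        * ((u+5)^2+v^2)) * A^2 := by
    rw [habs]
    rw [show (‖z+5‖ * (‖z+4‖ * (‖z+3‖ *
        (‖z+2‖ * (‖z+1‖ * (‖z‖ * A))))))^2
      = (‖z‖)^2 * (‖z+1‖)^2 * (‖z+2‖)^2 *
        (‖z+3‖)^2 * (‖z+4‖)^2 * (‖z+5‖)^2 * A^2
      from by ring]
    rw [sq0, sq1, sq2, sq3, sq4, sq5]
  -- lower bound from gamma_sq_lower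
  have harg : ((u+6:ℝ):ℂ) + v*I = z + 6 := by
    rw [hz]; push_cast; ring
  have hlow := gamma_sq_lower (u+6) v (by linarith) hs1
  rw [harg] at hlow
  rw [hPform] at hlow
  -- monotone numeric bounds
  have hβpos : (0:ℝ) < 1 - 1/(u1+6+5/2) := by
    have : (0:ℝ) < u1+6+5/2 := by linarith
    have h7 : (31:ℝ)/4 ≤ u1+6+5/2 := by linarith
    have : 1/(u1+6+5/2) ≤ 4/31 := by
      rw [div_le_div_iff₀ this (by norm_num)]; linarith
    linarith
  have hβ : 1 - 1/(u1+6+5/2) ≤ 1 - v^2/(u+6+5/2) := by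
    have hp1 : (0:ℝ) < u1+6+5/2 := by linarith
    have : v^2/(u+6+5/2) ≤ 1/(u1+6+5/2) := div_le_div₀ zero_le_one hs1 hp1 (by linarith)
    linarith
  -- F factor bounds
  have hF0 : 1+v^2/(u+6)^2 ≤ 1+1/(u1+6)^2 := by
    have hp : (0:ℝ) < (u1+6)^2 := pow_pos (by linarith) 2
    have : v^2/(u+6)^2 ≤ 1/(u1+6)^2 :=
      div_le_div₀ zero_le_one hs1 hp (pow_le_pow_left₀ (by linarith) (by linarith) 2)
    linarith
  have hF1 : 1+v^2/(u+6+1)^2 ≤ 1+1/(u1+6+1)^2 := by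
    have hp : (0:ℝ) < (u1+6+1)^2 := pow_pos (by linarith) 2
    have : v^2/(u+6+1)^2 ≤ 1/(u1+6+1)^2 :=
      div_le_div₀ zero_le_one hs1 hp (pow_le_pow_left₀ (by linarith) (by linarith) 2)
    linarith
  have hF2 : 1+v^2/(u+6+2)^2 ≤ 1+1/(u1+6+2)^2 := by
    have hp : (0:ℝ) < (u1+6+2)^2 := pow_pos (by linarith) 2
    have : v^2/(u+6+2)^2 ≤ 1/(u1+6+2)^2 :=
      div_le_div₀ zero_le_one hs1 hp (pow_le_pow_left₀ (by linarith) (by linarith) 2)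
    linarith
  have hF0n : (0:ℝ) ≤ 1+v^2/(u+6)^2 := by positivity
  have hF1n : (0:ℝ) ≤ 1+v^2/(u+6+1)^2 := by positivity
  have hF2n : (0:ℝ) ≤ 1+v^2/(u+6+2)^2 := by positivity
  have hF0bn : (0:ℝ) ≤ 1+1/(u1+6)^2 := by
    have : (0:ℝ) ≤ 1/(u1+6)^2 := by positivity
    linarith
  have hF1bn : (0:ℝ) ≤ 1+1/(u1+6+1)^2 := by
    have : (0:ℝ) ≤ 1/(u1+6+1)^2 := by positivity
    linarith
  have hF : (1+v^2/(u+6)^2)*(1+v^2/(u+6+1)^2)*(1+v^2/(u+6+2)^2) ≤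
      (1+1/(u1+6)^2)*(1+1/(u1+6+1)^2)*(1+1/(u1+6+2)^2) := by
    apply mul_le_mul (mul_le_mul hF0 hF1 hF1n hF0bn) hF2 hF2n
    exact mul_nonneg hF0bn hF1bn
  -- P factor bounds
  have hPf0 : u^2+v^2 ≤ u1^2+1 := by
    have e1 : (-u)^2 ≤ (-u1)^2 := pow_le_pow_left₀ (by linarith) (by linarith) 2
    have e2 : (-u)^2 = u^2 := by ring
    have e3 : (-u1)^2 = u1^2 := by ring
    linarith
  have hPf1 : (u+1)^2+v^2 ≤ (u2+1)^2+1 := by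
    have e1 : (u+1)^2 ≤ (u2+1)^2 := pow_le_pow_left₀ (by linarith) (by linarith) 2
    linarith
  have hPf2 : (u+2)^2+v^2 ≤ (u2+2)^2+1 := by
    have e1 : (u+2)^2 ≤ (u2+2)^2 := pow_le_pow_left₀ (by linarith) (by linarith) 2
    linarith
  have hPf3 : (u+3)^2+v^2 ≤ (u2+3)^2+1 := by
    have e1 : (u+3)^2 ≤ (u2+3)^2 := pow_le_pow_left₀ (by linarith) (by linarith) 2
    linarith
  have hPf4 : (u+4)^2+v^2 ≤ (u2+4)^2+1 := by
    have e1 : (u+4)^2 ≤ (u2+4)^2 := pow_le_pow_left₀ (by linarith) (by linarith) 2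
    linarith
  have hPf5 : (u+5)^2+v^2 ≤ (u2+5)^2+1 := by
    have e1 : (u+5)^2 ≤ (u2+5)^2 := pow_le_pow_left₀ (by linarith) (by linarith) 2
    linarith
  have hq0 : (0:ℝ) ≤ u^2+v^2 := by positivity
  have hq1 : (0:ℝ) ≤ (u+1)^2+v^2 := by positivity
  have hq2 : (0:ℝ) ≤ (u+2)^2+v^2 := by positivity
  have hq3 : (0:ℝ) ≤ (u+3)^2+v^2 := by positivity
  have hq4 : (0:ℝ) ≤ (u+4)^2+v^2 := by positivity
  have hq5 : (0:ℝ) ≤ (u+5)^2+v^2 := by positivity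
  have hb0 : (0:ℝ) ≤ u1^2+1 := by positivity
  have hb1 : (0:ℝ) ≤ (u2+1)^2+1 := by positivity
  have hb2 : (0:ℝ) ≤ (u2+2)^2+1 := by positivity
  have hb3 : (0:ℝ) ≤ (u2+3)^2+1 := by positivity
  have hb4 : (0:ℝ) ≤ (u2+4)^2+1 := by positivity
  have hP : (u^2+v^2) * ((u+1)^2+v^2) * ((u+2)^2+v^2) * ((u+3)^2+v^2) * ((u+4)^2+v^2)
      * ((u+5)^2+v^2) ≤
      (u1^2+1)*((u2+1)^2+1)*((u2+2)^2+1)*((u2+3)^2+1)*((u2+4)^2+1)*((u2+5)^2+1) := by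
    apply mul_le_mul _ hPf5 hq5
    · exact mul_nonneg (mul_nonneg (mul_nonneg (mul_nonneg hb0 hb1) hb2) hb3) hb4
    apply mul_le_mul _ hPf4 hq4
    · exact mul_nonneg (mul_nonneg (mul_nonneg hb0 hb1) hb2) hb3
    apply mul_le_mul _ hPf3 hq3
    · exact mul_nonneg (mul_nonneg hb0 hb1) hb2
    apply mul_le_mul _ hPf2 hq2
    · exact mul_nonneg hb0 hb1
    exact mul_le_mul hPf0 hPf1 hq1 hb0
  -- combine all
  have hA2 : (0:ℝ) ≤ A^2 := sq_nonneg A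
  set Pb : ℝ := (u1^2+1)*((u2+1)^2+1)*((u2+2)^2+1)*((u2+3)^2+1)*((u2+4)^2+1)*((u2+5)^2+1)
    with hPb
  set Fb : ℝ := (1+1/(u1+6)^2)*(1+1/(u1+6+1)^2)*(1+1/(u1+6+2)^2) with hFb
  set β : ℝ := 1 - 1/(u1+6+5/2) with hβdef
  -- main chain : g * β ≤ Pb * Fb * A^2
  have hGnn : (0:ℝ) ≤ Real.Gamma (u+6)^2 := sq_nonneg _
  have hgnn : 0 ≤ g ∨ g < 0 := le_or_gt 0 g
  have main : g * β ≤ Pb * Fb * A^2 := by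
    have step1 : g * β ≤ Real.Gamma (u+6)^2 * (1 - v^2/(u+6+5/2)) := by
      apply mul_le_mul hg hβ hβpos.le hGnn
    have step2 : Real.Gamma (u+6)^2 * (1 - v^2/(u+6+5/2)) ≤
        ((u^2+v^2) * ((u+1)^2+v^2) * ((u+2)^2+v^2) * ((u+3)^2+v^2) * ((u+4)^2+v^2)
        * ((u+5)^2+v^2)) * A^2 *
        ((1+v^2/(u+6)^2)*(1+v^2/(u+6+1)^2)*(1+v^2/(u+6+2)^2)) := hlow
    have hq : (0:ℝ) ≤ (u^2+v^2) * ((u+1)^2+v^2) * ((u+2)^2+v^2) * ((u+3)^2+v^2) *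
        ((u+4)^2+v^2) * ((u+5)^2+v^2) :=
      mul_nonneg (mul_nonneg (mul_nonneg (mul_nonneg (mul_nonneg hq0 hq1) hq2) hq3) hq4) hq5
    have hFnn : (0:ℝ) ≤ (1+v^2/(u+6)^2)*(1+v^2/(u+6+1)^2)*(1+v^2/(u+6+2)^2) :=
      mul_nonneg (mul_nonneg hF0n hF1n) hF2n
    have step3 : ((u^2+v^2) * ((u+1)^2+v^2) * ((u+2)^2+v^2) * ((u+3)^2+v^2) * ((u+4)^2+v^2)
        * ((u+5)^2+v^2)) * A^2 *
        ((1+v^2/(u+6)^2)*(1+v^2/(u+6+1)^2)*(1+v^2/(u+6+2)^2)) ≤ Pb * Fb * A^2 := by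
      rw [show Pb * Fb * A^2 = Pb * A^2 * Fb from by ring]
      apply mul_le_mul _ hF hFnn _
      · exact mul_le_mul_of_nonneg_right hP hA2
      · exact mul_nonneg (le_trans hq hP) hA2
    exact le_trans step1 (le_trans step2 step3)
  -- numeric finish
  have hPbpos : (0:ℝ) < Pb := by
    rw [hPb]
    have c0 : (0:ℝ) < u1^2+1 := by positivity
    have c1 : (0:ℝ) < (u2+1)^2+1 := by positivity
    have c2 : (0:ℝ) < (u2+2)^2+1 := by positivity
    have c3 : (0:ℝ) < (u2+3)^2+1 := by positivity
    have c4 : (0:ℝ) < (u2+4)^2+1 := by positivity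
    have c5 : (0:ℝ) < (u2+5)^2+1 := by positivity
    positivity
  have hFbpos : (0:ℝ) < Fb := by
    have c0 : (0:ℝ) ≤ 1/(u1+6)^2 := by positivity
    have c1 : (0:ℝ) ≤ 1/(u1+6+1)^2 := by positivity
    have c2 : (0:ℝ) ≤ 1/(u1+6+2)^2 := by positivity
    rw [hFb]
    have d0 : (0:ℝ) < 1+1/(u1+6)^2 := by linarith
    have d1 : (0:ℝ) < 1+1/(u1+6+1)^2 := by linarith
    have d2 : (0:ℝ) < 1+1/(u1+6+2)^2 := by linarith
    exact mul_pos (mul_pos d0 d1) d2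
  have heq : (16/100 * (Fb/β) * Pb) * β = 16/100 * (Fb * Pb) := by
    field_simp
  have h16 : 16/100 * (Fb * Pb) ≤ (Fb * Pb) * A^2 := by
    calc 16/100 * (Fb * Pb) = (16/100 * (Fb/β) * Pb) * β := heq.symm
      _ ≤ g * β := mul_le_mul_of_nonneg_right hnum hβpos.le
      _ ≤ Pb * Fb * A^2 := main
      _ = (Fb * Pb) * A^2 := by ring
  have hFP : (0:ℝ) < Fb * Pb := mul_pos hFbpos hPbpos
  have hA2ge : 16/100 ≤ A^2 := by
    have := (mul_le_mul_iff_of_pos_left hFP).mp (by linarith : (Fb*Pb) * (16/100) ≤ (Fb*Pb) * A^2)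
    linarith
  have hAnn : 0 ≤ A := norm_nonneg _
  by_contra hcon
  push_neg at hcon
  have hmul : A * A < (2/5) * (2/5) := mul_lt_mul' hcon.le hcon hAnn (by norm_num)
  have : A^2 = A * A := sq A
  linarith


theorem gamma_lower_bound_rectangle (u v : ℝ)
    (hu : u ∈ Set.Icc (-3/4 : ℝ) (-1/4)) (hv : v ∈ Set.Icc (0 : ℝ) 1) :
    0.4 ≤ ‖Complex.Gamma (u + v * I)‖ := by
  obtain ⟨hu1, hu2⟩ := hu
  obtain ⟨hv1, hv2⟩ := hv
  rw [show (0.4:ℝ) = 2/5 from by norm_num]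
  rcases le_or_gt u ((-47/64)) with h0 | h0
  · -- box 1
    exact boxed u v (-3/4) (-47/64) ((945/32)^2 * 3.141592 * ((330071/500000))^2) hu1 h0 (by norm_num) (by norm_num) (by norm_num) hv1 hv2
      (gamma_sq_lb_left u (-3/4) (-47/64) (330071/500000) (3787063/2500000) 16 hu1 h0 (by norm_num) (by norm_num)
        (by norm_num) (by norm_num) (by norm_num) (by norm_num) (by norm_num))
      (by norm_num)
  have hp1 : ((-47/64):ℝ) ≤ u := h0.le
  rcases le_or_gt u ((-23/32)) with h1 | h1
  · -- box 2
    exact boxed u v (-47/64) (-23/32) ((945/32)^2 * 3.141592 * ((1692577/2500000))^2) hp1 h1 (by norm_num) (by norm_num) (by norm_num) hv1 hv2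
      (gamma_sq_lb_left u (-47/64) (-23/32) (1692577/2500000) (14770373/10000000) 15 hp1 h1 (by norm_num) (by norm_num)
        (by norm_num) (by norm_num) (by norm_num) (by norm_num) (by norm_num))
      (by norm_num)
  have hp2 : ((-23/32):ℝ) ≤ u := h1.le
  rcases le_or_gt u ((-45/64)) with h2 | h2
  · -- box 3
    exact boxed u v (-23/32) (-45/64) ((945/32)^2 * 3.141592 * ((6944173/10000000))^2) hp2 h2 (by norm_num) (by norm_num) (by norm_num) hv1 hv2
      (gamma_sq_lb_left u (-23/32) (-45/64) (6944173/10000000) (14400559/10000000) 14 hp2 h2 (by norm_num) (by norm_num)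
        (by norm_num) (by norm_num) (by norm_num) (by norm_num) (by norm_num))
      (by norm_num)
  have hp3 : ((-45/64):ℝ) ≤ u := h2.le
  rcases le_or_gt u ((-11/16)) with h3 | h3
  · -- box 4
    exact boxed u v (-45/64) (-11/16) ((945/32)^2 * 3.141592 * ((7123173/10000000))^2) hp3 h3 (by norm_num) (by norm_num) (by norm_num) hv1 hv2
      (gamma_sq_lb_left u (-45/64) (-11/16) (7123173/10000000) (3509671/2500000) 13 hp3 h3 (by norm_num) (by norm_num)
        (by norm_num) (by norm_num) (by norm_num) (by norm_num) (by norm_num))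
      (by norm_num)
  have hp4 : ((-11/16):ℝ) ≤ u := h3.le
  rcases le_or_gt u ((-21/32)) with h4 | h4
  · -- box 5
    exact boxed u v (-11/16) (-21/32) ((945/32)^2 * 3.141592 * ((7303461/10000000))^2) hp4 h4 (by norm_num) (by norm_num) (by norm_num) hv1 hv2
      (gamma_sq_lb_left u (-11/16) (-21/32) (7303461/10000000) (1711517/1250000) 12 hp4 h4 (by norm_num) (by norm_num)
        (by norm_num) (by norm_num) (by norm_num) (by norm_num) (by norm_num))
      (by norm_num)
  have hp5 : ((-21/32):ℝ) ≤ u := h4.le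
  rcases le_or_gt u ((-5/8)) with h5 | h5
  · -- box 6
    exact boxed u v (-21/32) (-5/8) ((945/32)^2 * 3.141592 * ((1922287/2500000))^2) hp5 h5 (by norm_num) (by norm_num) (by norm_num) hv1 hv2
      (gamma_sq_lb_left u (-21/32) (-5/8) (1922287/2500000) (13005339/10000000) 10 hp5 h5 (by norm_num) (by norm_num)
        (by norm_num) (by norm_num) (by norm_num) (by norm_num) (by norm_num))
      (by norm_num)
  have hp6 : ((-5/8):ℝ) ≤ u := h5.le
  rcases le_or_gt u ((-19/32)) with h6 | h6
  · -- box 7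
    exact boxed u v (-5/8) (-19/32) ((945/32)^2 * 3.141592 * ((2024547/2500000))^2) hp6 h6 (by norm_num) (by norm_num) (by norm_num) hv1 hv2
      (gamma_sq_lb_left u (-5/8) (-19/32) (2024547/2500000) (12348439/10000000) 8 hp6 h6 (by norm_num) (by norm_num)
        (by norm_num) (by norm_num) (by norm_num) (by norm_num) (by norm_num))
      (by norm_num)
  have hp7 : ((-19/32):ℝ) ≤ u := h6.le
  rcases le_or_gt u ((-9/16)) with h7 | h7
  · -- box 8
    exact boxed u v (-19/32) (-9/16) ((945/32)^2 * 3.141592 * ((1706421/2000000))^2) hp7 h7 (by norm_num) (by norm_num) (by norm_num) hv1 hv2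
      (gamma_sq_lb_left u (-19/32) (-9/16) (1706421/2000000) (2344087/2000000) 6 hp7 h7 (by norm_num) (by norm_num)
        (by norm_num) (by norm_num) (by norm_num) (by norm_num) (by norm_num))
      (by norm_num)
  have hp8 : ((-9/16):ℝ) ≤ u := h7.le
  rcases le_or_gt u ((-1/2)) with h8 | h8
  · -- box 9
    exact boxed u v (-9/16) (-1/2) ((945/32)^2 * 3.141592 * ((8989327/10000000))^2) hp8 h8 (by norm_num) (by norm_num) (by norm_num) hv1 hv2
      (gamma_sq_lb_left u (-9/16) (-1/2) (8989327/10000000) (11124301/10000000) 4 hp8 h8 (by norm_num) (by norm_num)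
        (by norm_num) (by norm_num) (by norm_num) (by norm_num) (by norm_num))
      (by norm_num)
  have hp9 : ((-1/2):ℝ) ≤ u := h8.le
  rcases le_or_gt u ((-7/16)) with h9 | h9
  · -- box 10
    exact boxed u v (-1/2) (-7/16) ((11/2)^2 * (945/32)^2 * 3.141592 * ((1797751/10000000))^2) hp9 h9 (by norm_num) (by norm_num) (by norm_num) hv1 hv2
      (gamma_sq_lb_right u (-1/2) (-7/16) (1797751/10000000) (55625001/10000000) 64 hp9 h9 (by norm_num) (by norm_num)
        (by norm_num) (by norm_num) (by norm_num) (by norm_num) (by norm_num))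
      (by norm_num)
  have hp10 : ((-7/16):ℝ) ≤ u := h9.le
  rcases le_or_gt u ((-3/8)) with h10 | h10
  · -- box 11
    exact boxed u v (-7/16) (-3/8) ((11/2)^2 * (945/32)^2 * 3.141592 * ((1980431/10000000))^2) hp10 h10 (by norm_num) (by norm_num) (by norm_num) hv1 hv2
      (gamma_sq_lb_right u (-7/16) (-3/8) (1980431/10000000) (12623503/2500000) 60 hp10 h10 (by norm_num) (by norm_num)
        (by norm_num) (by norm_num) (by norm_num) (by norm_num) (by norm_num))
      (by norm_num)
  have hp11 : ((-3/8):ℝ) ≤ u := h10.le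
  rcases le_or_gt u ((-5/16)) with h11 | h11
  · -- box 12
    exact boxed u v (-3/8) (-5/16) ((11/2)^2 * (945/32)^2 * 3.141592 * ((3414/15625))^2) hp11 h11 (by norm_num) (by norm_num) (by norm_num) hv1 hv2
      (gamma_sq_lb_right u (-3/8) (-5/16) (3414/15625) (45767401/10000000) 56 hp11 h11 (by norm_num) (by norm_num)
        (by norm_num) (by norm_num) (by norm_num) (by norm_num) (by norm_num))
      (by norm_num)
  have hp12 : ((-5/16):ℝ) ≤ u := h11.le
  -- box 13
  exact boxed u v (-5/16) (-1/4) ((11/2)^2 * (945/32)^2 * 3.141592 * ((120709/500000))^2) hp12 hu2 (by norm_num) (by norm_num) (by norm_num) hv1 hv2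
    (gamma_sq_lb_right u (-5/16) (-1/4) (120709/500000) (5177739/1250000) 52 hp12 hu2 (by norm_num) (by norm_num)
      (by norm_num) (by norm_num) (by norm_num) (by norm_num) (by norm_num))
    (by norm_num)
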